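/- For every integer n ≥ 4, every bipartition S | Sᶜ of the parties {1,…,n} with |S| ≥ 2 and |Sᶜ| ≥ 2, every n-qubit pure state |ψ⟩ that is a tensor product |φ_S⟩ ⊗ |χ_{Sᶜ}⟩ across this bipartition, and every choice of arbitrary dichotomic qubit observables A₀⁽ʲ⁾, A₁⁽ʲ⁾ for each party, the Mermin expectation value satisfies ⟨ψ|M_n|ψ⟩ ≤ 2^{n−2}. (Thus the Mermin witness is completely robust against misalignment of the measurement directions for biseparable states whose bipartition puts at least two qubits on each side.) -/

import Mathlib

open Matrix Complex
open scoped ComplexOrder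

noncomputable section

/-- 2×2 complex matrices (single-qubit operators). -/
abbrev QubitMat := Matrix (Fin 2) (Fin 2) ℂ

def PauliX : QubitMat := !![0, 1; 1, 0]
def PauliY : QubitMat := !![0, -Complex.I; Complex.I, 0]
def PauliZ : QubitMat := !![1, 0; 0, -1]

/-- Operators on (ℂ²)^{⊗n}, with the tensor factors indexed by `Fin n`
    (the entry indices are functions `Fin n → Fin 2`). -/
abbrev NMat (n : ℕ) := Matrix (Fin n → Fin 2) (Fin n → Fin 2) ℂ

/-- The 2×2 matrix `A` acting on the `j`-th tensor factor of (ℂ²)^{⊗n},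
    padded with the identity on all other factors (Kronecker product). -/
def pad (n : ℕ) (j : Fin n) (A : QubitMat) : NMat n :=
  fun f g => A (f j) (g j) * ∏ i ∈ Finset.univ.erase j, (if f i = g i then (1 : ℂ) else 0)

/-- The Mermin recursion `M_k, N_k` for the block of parties `a, a+1, …, a+k−1`
    (0-based), with `M_0 = 1, N_0 = 0`; so `M_1 = A₀⁽ᵃ⁾`, `N_1 = A₁⁽ᵃ⁾`, and
    `M_k = M_{k−1}A₀ − N_{k−1}A₁`, `N_k = M_{k−1}A₁ + N_{k−1}A₀`. -/
def blockPair {n : ℕ} (A : Fin n → Fin 2 → QubitMat) (a : ℕ) : ℕ → NMat n × NMat n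
  | 0 => (1, 0)
  | k + 1 =>
    let P := blockPair A a k
    if h : a + k < n then
      (P.1 * pad n ⟨a + k, h⟩ (A ⟨a + k, h⟩ 0) - P.2 * pad n ⟨a + k, h⟩ (A ⟨a + k, h⟩ 1),
        P.1 * pad n ⟨a + k, h⟩ (A ⟨a + k, h⟩ 1) + P.2 * pad n ⟨a + k, h⟩ (A ⟨a + k, h⟩ 0))
    else P

/-- The Mermin operator `M_n` built from the observables `A j 0`, `A j 1`. -/
def merminM {n : ℕ} (A : Fin n → Fin 2 → QubitMat) : NMat n := (blockPair A 0 n).1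

/-- The companion operator `N_n`. -/
def merminN {n : ℕ} (A : Fin n → Fin 2 → QubitMat) : NMat n := (blockPair A 0 n).2

/-- A dichotomic qubit observable: Hermitian with `A² = I`. -/
def IsDichotomic (A : QubitMat) : Prop := A.IsHermitian ∧ A * A = 1

/-- A quantum state: positive semidefinite with unit trace. -/
def IsState {n : ℕ} (ρ : NMat n) : Prop := ρ.PosSemidef ∧ ρ.trace = 1

/-- The rank-one projector |ψ⟩⟨ψ| associated to a vector ψ. -/
def pureMat {n : ℕ} (ψ : (Fin n → Fin 2) → ℂ) : NMat n := Matrix.vecMulVec ψ (star ψ)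

def IsUnitVec {n : ℕ} (ψ : (Fin n → Fin 2) → ℂ) : Prop := ∑ f, Complex.normSq (ψ f) = 1

/-- A pure state is biseparable if it is a product across some nontrivial
    bipartition S | Sᶜ of the parties. -/
def PureBisep {n : ℕ} (ψ : (Fin n → Fin 2) → ℂ) : Prop :=
  ∃ S : Finset (Fin n), S.Nonempty ∧ S ≠ Finset.univ ∧
    ∃ (φ : ({i : Fin n // i ∈ S} → Fin 2) → ℂ) (χ : ({i : Fin n // i ∉ S} → Fin 2) → ℂ),
      ∀ f, ψ f = φ (fun i => f i.1) * χ (fun i => f i.1)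

/-- A mixed state is biseparable if it is a convex combination of pure
    biseparable states. -/
def IsBiseparable {n : ℕ} (ρ : NMat n) : Prop :=
  ∃ (m : ℕ) (w : Fin m → ℝ) (ψ : Fin m → ((Fin n → Fin 2) → ℂ)),
    (∀ i, 0 ≤ w i) ∧ (∑ i, w i = 1) ∧ (∀ i, IsUnitVec (ψ i)) ∧ (∀ i, PureBisep (ψ i)) ∧
    ρ = ∑ i, (w i : ℂ) • pureMat (ψ i)

/-- The expectation value ⟨ψ|M|ψ⟩. -/
def expectVal {n : ℕ} (ψ : (Fin n → Fin 2) → ℂ) (M : NMat n) : ℂ :=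
  star ψ ⬝ᵥ (M *ᵥ ψ)

set_option linter.unusedSectionVars false

section Tools
variable {ι : Type*} [Fintype ι] [DecidableEq ι]

abbrev IMat (ι : Type*) := Matrix (ι → Fin 2) (ι → Fin 2) ℂ

def padI (j : ι) (X : QubitMat) : IMat ι :=
  fun f g => X (f j) (g j) * ∏ i ∈ Finset.univ.erase j, (if f i = g i then (1:ℂ) else 0)

def KT (B : ι → QubitMat) (T : Finset ι) : IMat ι :=
  fun f g => (∏ j ∈ T, B j (f j) (g j)) * ∏ j ∈ Tᶜ, (if f j = g j then (1:ℂ) else 0)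

lemma delta_prod (s : Finset ι) (f g : ι → Fin 2) (h : ∃ i ∈ s, f i ≠ g i) :
    (∏ i ∈ s, (if f i = g i then (1:ℂ) else 0)) = 0 := by
  obtain ⟨i, hi, hne⟩ := h
  exact Finset.prod_eq_zero hi (if_neg hne)

lemma delta_prod_univ (f g : ι → Fin 2) :
    (∏ i : ι, (if f i = g i then (1:ℂ) else 0)) = if f = g then 1 else 0 := by
  by_cases h : f = g
  · subst h; simp
  · rw [if_neg h]
    obtain ⟨i, hi⟩ := Function.ne_iff.mp h
    exact delta_prod _ _ _ ⟨i, Finset.mem_univ i, hi⟩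

lemma collapseSum (j : ι) (g : ι → Fin 2) (F : (ι → Fin 2) → ℂ)
    (hF : ∀ h : ι → Fin 2, (∃ i, i ≠ j ∧ h i ≠ g i) → F h = 0) :
    ∑ h, F h = ∑ t : Fin 2, F (Function.update g j t) := by
  classical
  have hstep : ∑ h ∈ Finset.univ.filter (fun h => ∀ i, i ≠ j → h i = g i), F h = ∑ h, F h :=
    Finset.sum_filter_of_ne (by
      intro x _ hx i hij
      by_contra hne
      exact hx (hF x ⟨i, hij, hne⟩))
  have himg : Finset.univ.filter (fun h => ∀ i, i ≠ j → h i = g i)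
      = Finset.univ.image (fun t => Function.update g j t) := by
    ext h
    simp only [Finset.mem_filter, Finset.mem_image, Finset.mem_univ, true_and]
    constructor
    · intro hh
      refine ⟨h j, ?_⟩
      funext i
      by_cases hij : i = j
      · subst hij; simp
      · rw [Function.update_of_ne hij]; exact (hh i hij).symm
    · rintro ⟨t, rfl⟩ i hij
      exact Function.update_of_ne hij _ _
  rw [← hstep, himg, Finset.sum_image]
  intro a _ b _ hab
  have := congrFun hab j
  simpa using this

lemma padI_one (j : ι) : padI (ι := ι) j 1 = 1 := by
  funext f g
  show (1:QubitMat) (f j) (g j) * _ = _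
  rw [Matrix.one_apply, Matrix.one_apply]
  by_cases h : f = g
  · subst h; simp
  · rw [if_neg h]
    by_cases hj : f j = g j
    · rw [if_pos hj, one_mul]
      obtain ⟨i, hi⟩ := Function.ne_iff.mp h
      refine delta_prod _ _ _ ⟨i, ?_, hi⟩
      refine Finset.mem_erase.mpr ⟨?_, Finset.mem_univ i⟩
      rintro rfl; exact hi hj
    · rw [if_neg hj, zero_mul]

lemma padI_mul (j : ι) (X Y : QubitMat) : padI j X * padI j Y = padI (ι:=ι) j (X * Y) := by
  funext f g
  rw [Matrix.mul_apply]
  rw [collapseSum j g _ (by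
    intro h ⟨i, hij, hne⟩
    have : padI j Y h g = 0 := by
      unfold padI
      rw [delta_prod _ _ _ ⟨i, Finset.mem_erase.mpr ⟨hij, Finset.mem_univ i⟩, hne⟩, mul_zero]
    rw [this, mul_zero])]
  unfold padI
  have hupd : ∀ (t : Fin 2) (i : ι), i ∈ Finset.univ.erase j →
      Function.update g j t i = g i := by
    intro t i hi
    exact Function.update_of_ne (Finset.mem_erase.mp hi).1 _ _
  have h1 : ∀ t : Fin 2,
      (∏ i ∈ Finset.univ.erase j, (if f i = Function.update g j t i then (1:ℂ) else 0))
      = ∏ i ∈ Finset.univ.erase j, (if f i = g i then (1:ℂ) else 0) := by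
    intro t
    exact Finset.prod_congr rfl (fun i hi => by rw [hupd t i hi])
  have h2 : ∀ t : Fin 2,
      (∏ i ∈ Finset.univ.erase j, (if Function.update g j t i = g i then (1:ℂ) else 0)) = 1 := by
    intro t
    refine Finset.prod_eq_one (fun i hi => by rw [hupd t i hi, if_pos rfl])
  calc ∑ t : Fin 2, X (f j) (Function.update g j t j) *
        (∏ i ∈ Finset.univ.erase j, (if f i = Function.update g j t i then (1:ℂ) else 0)) *
        (Y (Function.update g j t j) (g j) *
         ∏ i ∈ Finset.univ.erase j, (if Function.update g j t i = g i then (1:ℂ) else 0))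
      = ∑ t : Fin 2, (X (f j) t * Y t (g j)) *
          ∏ i ∈ Finset.univ.erase j, (if f i = g i then (1:ℂ) else 0) := by
        refine Finset.sum_congr rfl (fun t _ => ?_)
        rw [h1 t, h2 t, Function.update_self]
        ring
    _ = (X * Y) (f j) (g j) * ∏ i ∈ Finset.univ.erase j, (if f i = g i then (1:ℂ) else 0) := by
        rw [← Finset.sum_mul, Matrix.mul_apply]


-- NEW CHUNK
lemma padI_add (j : ι) (X Y : QubitMat) : padI (ι:=ι) j (X + Y) = padI j X + padI j Y := by
  funext f g
  show (X (f j) (g j) + Y (f j) (g j)) * _ = _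
  rw [add_mul]; rfl

lemma padI_smul (j : ι) (c : ℂ) (X : QubitMat) : padI (ι:=ι) j (c • X) = c • padI j X := by
  funext f g
  show (c * X (f j) (g j)) * _ = c * _
  rw [mul_assoc]; rfl

lemma delta_star (s : Finset ι) (f g : ι → Fin 2) :
    star (∏ i ∈ s, (if f i = g i then (1:ℂ) else 0))
      = ∏ i ∈ s, (if g i = f i then (1:ℂ) else 0) := by
  rw [star_prod]
  refine Finset.prod_congr rfl (fun i _ => ?_)
  by_cases h : f i = g i
  · rw [if_pos h, if_pos h.symm, star_one]
  · rw [if_neg h, if_neg (Ne.symm h), star_zero]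

lemma padI_conjTranspose (j : ι) (X : QubitMat) : (padI (ι:=ι) j X)ᴴ = padI j Xᴴ := by
  funext f g
  rw [Matrix.conjTranspose_apply]
  show star (X (g j) (f j) * ∏ i ∈ Finset.univ.erase j, (if g i = f i then (1:ℂ) else 0))
    = Xᴴ (f j) (g j) * ∏ i ∈ Finset.univ.erase j, (if f i = g i then (1:ℂ) else 0)
  rw [star_mul', delta_star, ← Matrix.conjTranspose_apply, mul_comm]

lemma KT_empty (B : ι → QubitMat) : KT B ∅ = 1 := by
  funext f g
  show (∏ j ∈ (∅:Finset ι), _) * _ = _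
  rw [Finset.prod_empty, one_mul, Finset.compl_empty]
  by_cases h : f = g
  · subst h; simp [Matrix.one_apply]
  · rw [Matrix.one_apply_ne h, delta_prod]
    obtain ⟨i, hi⟩ := Function.ne_iff.mp h
    exact ⟨i, Finset.mem_univ i, hi⟩

lemma KT_conjTranspose (B : ι → QubitMat) (T : Finset ι) :
    (KT B T)ᴴ = KT (fun j => (B j)ᴴ) T := by
  funext f g
  rw [Matrix.conjTranspose_apply]
  show star ((∏ i ∈ T, B i (g i) (f i)) * ∏ i ∈ Tᶜ, (if g i = f i then (1:ℂ) else 0))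
    = (∏ i ∈ T, (B i)ᴴ (f i) (g i)) * ∏ i ∈ Tᶜ, (if f i = g i then (1:ℂ) else 0)
  rw [star_mul', delta_star, star_prod,
    Finset.prod_congr rfl (fun i _ => (Matrix.conjTranspose_apply (B i) (g i) (f i)).symm), mul_comm]

lemma KT_insert_right (B : ι → QubitMat) {T : Finset ι} {j : ι} (hj : j ∉ T) :
    KT B (insert j T) = KT B T * padI j (B j) := by
  funext f g
  rw [Matrix.mul_apply]
  rw [collapseSum j g _ (by
    intro h ⟨i, hij, hne⟩
    have : padI j (B j) h g = 0 := by
      unfold padI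
      rw [delta_prod _ _ _ ⟨i, Finset.mem_erase.mpr ⟨hij, Finset.mem_univ i⟩, hne⟩, mul_zero]
    rw [this, mul_zero])]
  have hjc : j ∈ Tᶜ := Finset.mem_compl.mpr hj
  have hTc : Tᶜ = insert j ((insert j T)ᶜ) := by
    rw [Finset.compl_insert, Finset.insert_erase hjc]
  have hjnotin : j ∉ (insert j T)ᶜ := by
    simp [Finset.mem_compl]
  -- evaluate the sum over t
  have hterm : ∀ t : Fin 2,
      KT B T f (Function.update g j t) * padI j (B j) (Function.update g j t) g
      = (if f j = t then (1:ℂ) else 0) *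
        ((∏ i ∈ T, B i (f i) (g i)) * B j t (g j) *
          ∏ i ∈ (insert j T)ᶜ, (if f i = g i then (1:ℂ) else 0)) := by
    intro t
    unfold KT padI
    have hup : ∀ i : ι, i ≠ j → Function.update g j t i = g i :=
      fun i hi => Function.update_of_ne hi _ _
    rw [Function.update_self]
    have e1 : (∏ i ∈ T, B i (f i) (Function.update g j t i)) = ∏ i ∈ T, B i (f i) (g i) :=
      Finset.prod_congr rfl (fun i hi => by rw [hup i (fun h => hj (h ▸ hi))])
    have e2 : (∏ i ∈ Tᶜ, (if f i = Function.update g j t i then (1:ℂ) else 0))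
        = (if f j = t then (1:ℂ) else 0) *
          ∏ i ∈ (insert j T)ᶜ, (if f i = g i then (1:ℂ) else 0) := by
      rw [hTc, Finset.prod_insert hjnotin, Function.update_self]
      congr 1
      refine Finset.prod_congr rfl (fun i hi => ?_)
      have : i ≠ j := fun h => by
        subst h
        exact (Finset.mem_compl.mp hi) (Finset.mem_insert_self i T)
      rw [hup i this]
    have e3 : (∏ i ∈ Finset.univ.erase j, (if Function.update g j t i = g i then (1:ℂ) else 0)) = 1 :=
      Finset.prod_eq_one (fun i hi => by rw [hup i (Finset.mem_erase.mp hi).1, if_pos rfl])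
    rw [e1, e2, e3]
    ring
  rw [Finset.sum_congr rfl (fun t _ => hterm t)]
  simp only [ite_mul, one_mul, zero_mul]
  rw [Finset.sum_ite_eq (Finset.univ) (f j)]
  rw [if_pos (Finset.mem_univ _)]
  unfold KT
  rw [Finset.prod_insert hj]
  ring

lemma KT_insert_left (B : ι → QubitMat) {T : Finset ι} {j : ι} (hj : j ∉ T) :
    KT B (insert j T) = padI j (B j) * KT B T := by
  funext f g
  rw [Matrix.mul_apply]
  rw [collapseSum j f _ (by
    intro h ⟨i, hij, hne⟩
    have : padI j (B j) f h = 0 := by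
      unfold padI
      rw [delta_prod _ _ _ ⟨i, Finset.mem_erase.mpr ⟨hij, Finset.mem_univ i⟩, fun e => hne e.symm⟩,
        mul_zero]
    rw [this, zero_mul])]
  have hjc : j ∈ Tᶜ := Finset.mem_compl.mpr hj
  have hTc : Tᶜ = insert j ((insert j T)ᶜ) := by
    rw [Finset.compl_insert, Finset.insert_erase hjc]
  have hjnotin : j ∉ (insert j T)ᶜ := by simp [Finset.mem_compl]
  have hterm : ∀ t : Fin 2,
      padI j (B j) f (Function.update f j t) * KT B T (Function.update f j t) g
      = (if t = g j then (1:ℂ) else 0) *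
        ((∏ i ∈ T, B i (f i) (g i)) * B j (f j) t *
          ∏ i ∈ (insert j T)ᶜ, (if f i = g i then (1:ℂ) else 0)) := by
    intro t
    unfold KT padI
    have hup : ∀ i : ι, i ≠ j → Function.update f j t i = f i :=
      fun i hi => Function.update_of_ne hi _ _
    rw [Function.update_self]
    have e1 : (∏ i ∈ T, B i (Function.update f j t i) (g i)) = ∏ i ∈ T, B i (f i) (g i) :=
      Finset.prod_congr rfl (fun i hi => by rw [hup i (fun h => hj (h ▸ hi))])
    have e2 : (∏ i ∈ Tᶜ, (if Function.update f j t i = g i then (1:ℂ) else 0))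
        = (if t = g j then (1:ℂ) else 0) *
          ∏ i ∈ (insert j T)ᶜ, (if f i = g i then (1:ℂ) else 0) := by
      rw [hTc, Finset.prod_insert hjnotin, Function.update_self]
      congr 1
      refine Finset.prod_congr rfl (fun i hi => ?_)
      have : i ≠ j := fun h => by
        subst h
        exact (Finset.mem_compl.mp hi) (Finset.mem_insert_self i T)
      rw [hup i this]
    have e3 : (∏ i ∈ Finset.univ.erase j, (if f i = Function.update f j t i then (1:ℂ) else 0)) = 1 :=
      Finset.prod_eq_one (fun i hi => by rw [hup i (Finset.mem_erase.mp hi).1, if_pos rfl])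
    rw [e1, e2, e3]
    ring
  rw [Finset.sum_congr rfl (fun t _ => hterm t)]
  simp only [ite_mul, one_mul, zero_mul]
  rw [Finset.sum_ite_eq' (Finset.univ) (g j)]
  rw [if_pos (Finset.mem_univ _)]
  unfold KT
  rw [Finset.prod_insert hj]
  ring

end Tools

section Hilbert
variable {ι : Type*} [Fintype ι] [DecidableEq ι]

/-- inner product `⟨x, y⟩ = ∑ conj (x i) * y i`. -/
def ip (x y : (ι → Fin 2) → ℂ) : ℂ := star x ⬝ᵥ y

def toE (v : (ι → Fin 2) → ℂ) : EuclideanSpace ℂ (ι → Fin 2) := WithLp.toLp 2 v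

def sqn (v : (ι → Fin 2) → ℂ) : ℝ := ‖toE v‖ ^ 2

lemma ip_inner (x y : (ι → Fin 2) → ℂ) : (inner ℂ (toE x) (toE y) : ℂ) = ip x y := by
  simp [toE, PiLp.inner_apply, RCLike.inner_apply, ip, dotProduct, mul_comm]

lemma sqn_eq (v : (ι → Fin 2) → ℂ) : sqn v = (ip v v).re := by
  rw [← ip_inner]
  exact (inner_self_eq_norm_sq (𝕜 := ℂ) (toE v)).symm

lemma sqn_nonneg (v : (ι → Fin 2) → ℂ) : 0 ≤ sqn v := sq_nonneg _

lemma ip_CS (x y : (ι → Fin 2) → ℂ) : ‖ip x y‖ ≤ ‖toE x‖ * ‖toE y‖ := by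
  rw [← ip_inner]
  exact norm_inner_le_norm _ _

lemma ip_mulVec_left (M : IMat ι) (x y : (ι → Fin 2) → ℂ) :
    ip (M *ᵥ x) y = ip x (Mᴴ *ᵥ y) := by
  unfold ip
  rw [Matrix.star_mulVec, ← Matrix.dotProduct_mulVec]

lemma ip_add_right (x y z : (ι → Fin 2) → ℂ) : ip x (y + z) = ip x y + ip x z :=
  dotProduct_add _ _ _

lemma ip_sub_right (x y z : (ι → Fin 2) → ℂ) : ip x (y - z) = ip x y - ip x z :=
  dotProduct_sub _ _ _

lemma ip_smul_right (c : ℂ) (x y : (ι → Fin 2) → ℂ) : ip x (c • y) = c * ip x y := by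
  unfold ip
  rw [dotProduct_smul]
  rfl

lemma sqn_mulVec (M : IMat ι) (v : (ι → Fin 2) → ℂ) :
    sqn (M *ᵥ v) = (ip v ((Mᴴ * M) *ᵥ v)).re := by
  rw [sqn_eq, ip_mulVec_left, Matrix.mulVec_mulVec]

lemma norm_eq_of_sqn_eq {x y : (ι → Fin 2) → ℂ} (h : sqn x = sqn y) : ‖toE x‖ = ‖toE y‖ := by
  unfold sqn at h
  have := congrArg Real.sqrt h
  simpa [Real.sqrt_sq, norm_nonneg] using this

lemma norm_le_of_sqn_le {x : (ι → Fin 2) → ℂ} {b : ℝ} (hb : 0 ≤ b) (h : sqn x ≤ b ^ 2) :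
    ‖toE x‖ ≤ b := by
  unfold sqn at h
  nlinarith [norm_nonneg (toE x)]

end Hilbert

section Dich

/-- A dichotomic qubit observable: Hermitian with `A² = I`. -/
def IsDichotomic' (A : QubitMat) : Prop := A.IsHermitian ∧ A * A = 1

variable {A0 A1 : QubitMat}

lemma dich_conjT (h0 : A0.IsHermitian) (h1 : A1.IsHermitian) :
    (A0 + Complex.I • A1)ᴴ = A0 - Complex.I • A1 := by
  rw [Matrix.conjTranspose_add, Matrix.conjTranspose_smul, h0.eq, h1.eq]
  simp [sub_eq_add_neg, Complex.conj_I, neg_smul]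

lemma dich_XhX (h0 : IsDichotomic' A0) (h1 : IsDichotomic' A1) :
    (A0 + Complex.I • A1)ᴴ * (A0 + Complex.I • A1)
      = (2:ℂ) • (1 : QubitMat) + Complex.I • (A0 * A1 - A1 * A0) := by
  rw [dich_conjT h0.1 h1.1]
  simp only [Matrix.sub_mul, Matrix.mul_add, Matrix.add_mul, Matrix.mul_sub, Matrix.smul_mul,
    Matrix.mul_smul, smul_sub, smul_add, smul_smul, Complex.I_mul_I, h0.2, h1.2]
  module

lemma dich_XXh (h0 : IsDichotomic' A0) (h1 : IsDichotomic' A1) :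
    (A0 + Complex.I • A1) * (A0 + Complex.I • A1)ᴴ
      = (2:ℂ) • (1 : QubitMat) - Complex.I • (A0 * A1 - A1 * A0) := by
  rw [dich_conjT h0.1 h1.1]
  simp only [Matrix.sub_mul, Matrix.mul_add, Matrix.add_mul, Matrix.mul_sub, Matrix.smul_mul,
    Matrix.mul_smul, smul_sub, smul_add, smul_smul, Complex.I_mul_I, h0.2, h1.2]
  module

end Dich

section Core
variable {ι : Type*} [Fintype ι] [DecidableEq ι]
variable {A0 A1 : ι → QubitMat}

/-- value of the commutator term -/
def cval (j : ι) (A0 A1 : ι → QubitMat) (v : (ι → Fin 2) → ℂ) : ℝ :=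
  (ip v ((Complex.I • padI j (A0 j * A1 j - A1 j * A0 j)) *ᵥ v)).re

lemma smul_one_add_mulVec (C : IMat ι) (v : (ι → Fin 2) → ℂ) :
    ip v (((2:ℂ) • (1 : IMat ι) + C) *ᵥ v) = 2 * ip v v + ip v (C *ᵥ v) := by
  rw [Matrix.add_mulVec, ip_add_right, Matrix.smul_mulVec, Matrix.one_mulVec,
    ip_smul_right]

lemma smul_one_sub_mulVec (C : IMat ι) (v : (ι → Fin 2) → ℂ) :
    ip v (((2:ℂ) • (1 : IMat ι) - C) *ᵥ v) = 2 * ip v v - ip v (C *ᵥ v) := by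
  rw [Matrix.sub_mulVec, ip_sub_right, Matrix.smul_mulVec, Matrix.one_mulVec,
    ip_smul_right]

lemma padX_sqn (j : ι) (h0 : IsDichotomic' (A0 j)) (h1 : IsDichotomic' (A1 j))
    (v : (ι → Fin 2) → ℂ) :
    sqn (padI j (A0 j + Complex.I • A1 j) *ᵥ v) = 2 * sqn v + cval j A0 A1 v := by
  rw [sqn_mulVec, padI_conjTranspose, padI_mul, dich_XhX h0 h1]
  have hpad : padI (ι := ι) j ((2:ℂ) • (1 : QubitMat) + Complex.I • (A0 j * A1 j - A1 j * A0 j))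
      = (2:ℂ) • (1 : IMat ι) + Complex.I • padI j (A0 j * A1 j - A1 j * A0 j) := by
    rw [padI_add, padI_smul, padI_one, padI_smul]
  rw [hpad, smul_one_add_mulVec]
  unfold cval
  rw [sqn_eq]
  simp

lemma padXh_sqn (j : ι) (h0 : IsDichotomic' (A0 j)) (h1 : IsDichotomic' (A1 j))
    (v : (ι → Fin 2) → ℂ) :
    sqn (padI j ((A0 j + Complex.I • A1 j)ᴴ) *ᵥ v) = 2 * sqn v - cval j A0 A1 v := by
  rw [sqn_mulVec, padI_conjTranspose, Matrix.conjTranspose_conjTranspose, padI_mul,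
    dich_XXh h0 h1]
  have hsub : (2:ℂ) • (1 : QubitMat) - Complex.I • (A0 j * A1 j - A1 j * A0 j)
      = (2:ℂ) • 1 + (-Complex.I) • (A0 j * A1 j - A1 j * A0 j) := by
    rw [neg_smul, ← sub_eq_add_neg]
  have hpad : padI (ι := ι) j ((2:ℂ) • (1 : QubitMat) - Complex.I • (A0 j * A1 j - A1 j * A0 j))
      = (2:ℂ) • (1 : IMat ι) - Complex.I • padI j (A0 j * A1 j - A1 j * A0 j) := by
    rw [hsub, padI_add, padI_smul, padI_one, padI_smul, neg_smul, ← sub_eq_add_neg]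
  rw [hpad, smul_one_sub_mulVec]
  unfold cval
  rw [sqn_eq]
  simp

end Core

section Core2
variable {ι : Type*} [Fintype ι] [DecidableEq ι]
variable (A0 A1 : ι → QubitMat)

def Bfam (A0 A1 : ι → QubitMat) : ι → QubitMat := fun j => A0 j + Complex.I • A1 j

lemma ip_mulVec_right (M : IMat ι) (x y : (ι → Fin 2) → ℂ) :
    ip x (M *ᵥ y) = ip (Mᴴ *ᵥ x) y := by
  rw [ip_mulVec_left, Matrix.conjTranspose_conjTranspose]

lemma pad_norm_le (j : ι) (h0 : IsDichotomic' (A0 j)) (h1 : IsDichotomic' (A1 j))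
    (v : (ι → Fin 2) → ℂ) :
    ‖toE (padI j (Bfam A0 A1 j) *ᵥ v)‖ ≤ 2 * ‖toE v‖ := by
  apply norm_le_of_sqn_le (by positivity)
  have h1' := padX_sqn j h0 h1 v
  have h2' := padXh_sqn j h0 h1 v
  have h3 := sqn_nonneg (padI j ((A0 j + Complex.I • A1 j)ᴴ) *ᵥ v)
  have h4 := sqn_nonneg v
  show sqn (padI j (A0 j + Complex.I • A1 j) *ᵥ v) ≤ (2 * ‖toE v‖) ^ 2
  have h5 : ‖toE v‖ ^ 2 = sqn v := rfl
  nlinarith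

lemma KT_norm_le (h0 : ∀ j, IsDichotomic' (A0 j)) (h1 : ∀ j, IsDichotomic' (A1 j))
    (T : Finset ι) (v : (ι → Fin 2) → ℂ) :
    ‖toE (KT (Bfam A0 A1) T *ᵥ v)‖ ≤ 2 ^ T.card * ‖toE v‖ := by
  induction T using Finset.induction_on generalizing v with
  | empty =>
    rw [KT_empty, Matrix.one_mulVec]
    simp
  | @insert j T hj ih =>
    rw [KT_insert_left _ hj, ← Matrix.mulVec_mulVec]
    have e1 := pad_norm_le A0 A1 j (h0 j) (h1 j) (KT (Bfam A0 A1) T *ᵥ v)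
    have e2 := ih v
    have e3 : ‖toE (KT (Bfam A0 A1) T *ᵥ v)‖ ≥ 0 := norm_nonneg _
    rw [Finset.card_insert_of_notMem hj, pow_succ]
    nlinarith

set_option maxHeartbeats 1000000 in
lemma core_bound (hcard : 2 ≤ Fintype.card ι)
    (h0 : ∀ j, IsDichotomic' (A0 j)) (h1 : ∀ j, IsDichotomic' (A1 j))
    (v : (ι → Fin 2) → ℂ) :
    ‖ip v (KT (Bfam A0 A1) Finset.univ *ᵥ v)‖
      ≤ 2 ^ (Fintype.card ι - 1) * sqn v := by
  obtain ⟨j₁, j₂, hne⟩ := Fintype.exists_pair_of_one_lt_card (α := ι) (by omega)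
  set B := Bfam A0 A1 with hB
  set T₀ : Finset ι := ({j₁, j₂} : Finset ι)ᶜ with hT₀
  have hj2T : j₂ ∉ T₀ := by simp [hT₀]
  have hj1T : j₁ ∉ T₀ := by simp [hT₀]
  have hins2 : insert j₂ T₀ = ({j₁} : Finset ι)ᶜ := by
    ext x
    simp only [hT₀, Finset.mem_insert, Finset.mem_compl, Finset.mem_singleton]
    constructor
    · rintro (rfl | h)
      · exact fun hx => hne hx.symm
      · exact fun hx => (h (Or.inl hx)).elim
    · intro hx
      by_cases h2 : x = j₂
      · exact Or.inl h2
      · exact Or.inr (fun hmem => by rcases hmem with h' | h' <;> [exact hx h'; exact h2 h'])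
  have hins1 : insert j₁ T₀ = ({j₂} : Finset ι)ᶜ := by
    ext x
    simp only [hT₀, Finset.mem_insert, Finset.mem_compl, Finset.mem_singleton]
    constructor
    · rintro (rfl | h)
      · exact fun hx => hne hx
      · exact fun hx => (h (Or.inr hx)).elim
    · intro hx
      by_cases h2 : x = j₁
      · exact Or.inl h2
      · exact Or.inr (fun hmem => by rcases hmem with h' | h' <;> [exact h2 h'; exact hx h'])
  have huniv2 : insert j₁ (insert j₂ T₀) = Finset.univ := by
    rw [hins2]
    ext x
    simp only [Finset.mem_insert, Finset.mem_compl, Finset.mem_singleton, Finset.mem_univ,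
      iff_true]
    by_cases h2 : x = j₁
    · exact Or.inl h2
    · exact Or.inr h2
  have huniv1 : insert j₂ (insert j₁ T₀) = Finset.univ := by
    rw [hins1]
    ext x
    simp only [Finset.mem_insert, Finset.mem_compl, Finset.mem_singleton, Finset.mem_univ,
      iff_true]
    by_cases h2 : x = j₂
    · exact Or.inl h2
    · exact Or.inr h2
  have hm : T₀.card = Fintype.card ι - 2 := by
    rw [hT₀, Finset.card_compl, Finset.card_pair hne]
  have hj1ins : j₁ ∉ insert j₂ T₀ := by rw [hins2]; simp
  have hj2ins : j₂ ∉ insert j₁ T₀ := by rw [hins1]; simp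
  have hsplit1 : KT B Finset.univ = padI j₁ (B j₁) * (KT B T₀ * padI j₂ (B j₂)) := by
    rw [← huniv2, KT_insert_left _ hj1ins, KT_insert_right _ hj2T]
  have hsplit2 : KT B Finset.univ = padI j₂ (B j₂) * (KT B T₀ * padI j₁ (B j₁)) := by
    rw [← huniv1, KT_insert_left _ hj2ins, KT_insert_right _ hj1T]
  set N := sqn v with hN
  set x1 := ‖toE (padI j₁ (B j₁) *ᵥ v)‖ with hx1d
  set y1 := ‖toE (padI j₁ ((B j₁)ᴴ) *ᵥ v)‖ with hy1d
  set x2 := ‖toE (padI j₂ (B j₂) *ᵥ v)‖ with hx2d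
  set y2 := ‖toE (padI j₂ ((B j₂)ᴴ) *ᵥ v)‖ with hy2d
  set m := Fintype.card ι - 2 with hmd
  set K := ‖ip v (KT B Finset.univ *ᵥ v)‖ with hK
  -- estimate 1
  have est1 : K ≤ y1 * (2 ^ m * x2) := by
    rw [hK, hsplit1, ← Matrix.mulVec_mulVec, ip_mulVec_right, padI_conjTranspose,
      ← Matrix.mulVec_mulVec]
    calc ‖ip (padI j₁ ((B j₁)ᴴ) *ᵥ v) (KT B T₀ *ᵥ (padI j₂ (B j₂) *ᵥ v))‖
        ≤ y1 * ‖toE (KT B T₀ *ᵥ (padI j₂ (B j₂) *ᵥ v))‖ := ip_CS _ _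
      _ ≤ y1 * (2 ^ m * x2) := by
          have := KT_norm_le A0 A1 h0 h1 T₀ (padI j₂ (B j₂) *ᵥ v)
          rw [hm] at this
          have hy1nn : 0 ≤ y1 := norm_nonneg _
          rw [← hB] at this
          nlinarith
  have est2 : K ≤ y2 * (2 ^ m * x1) := by
    rw [hK, hsplit2, ← Matrix.mulVec_mulVec, ip_mulVec_right, padI_conjTranspose,
      ← Matrix.mulVec_mulVec]
    calc ‖ip (padI j₂ ((B j₂)ᴴ) *ᵥ v) (KT B T₀ *ᵥ (padI j₁ (B j₁) *ᵥ v))‖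
        ≤ y2 * ‖toE (KT B T₀ *ᵥ (padI j₁ (B j₁) *ᵥ v))‖ := ip_CS _ _
      _ ≤ y2 * (2 ^ m * x1) := by
          have := KT_norm_le A0 A1 h0 h1 T₀ (padI j₁ (B j₁) *ᵥ v)
          rw [hm] at this
          have hy2nn : 0 ≤ y2 := norm_nonneg _
          rw [← hB] at this
          nlinarith
  -- squared-norm identities
  have hx1 : x1 ^ 2 = 2 * N + cval j₁ A0 A1 v := padX_sqn j₁ (h0 j₁) (h1 j₁) v
  have hy1 : y1 ^ 2 = 2 * N - cval j₁ A0 A1 v := padXh_sqn j₁ (h0 j₁) (h1 j₁) v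
  have hx2 : x2 ^ 2 = 2 * N + cval j₂ A0 A1 v := padX_sqn j₂ (h0 j₂) (h1 j₂) v
  have hy2 : y2 ^ 2 = 2 * N - cval j₂ A0 A1 v := padXh_sqn j₂ (h0 j₂) (h1 j₂) v
  have hNnn : 0 ≤ N := sqn_nonneg v
  have x1nn : 0 ≤ x1 := norm_nonneg _
  have y1nn : 0 ≤ y1 := norm_nonneg _
  have x2nn : 0 ≤ x2 := norm_nonneg _
  have y2nn : 0 ≤ y2 := norm_nonneg _
  have hxy1 : x1 * y1 ≤ 2 * N := by nlinarith [sq_nonneg (cval j₁ A0 A1 v)]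
  have hxy2 : x2 * y2 ≤ 2 * N := by nlinarith [sq_nonneg (cval j₂ A0 A1 v)]
  have hKnn : 0 ≤ K := norm_nonneg _
  have hpm : (0:ℝ) < 2 ^ m := by positivity
  have h12 : K * K ≤ (y1 * (2 ^ m * x2)) * (y2 * (2 ^ m * x1)) :=
    mul_le_mul est1 est2 hKnn (mul_nonneg y1nn (mul_nonneg (le_of_lt hpm) x2nn))
  have hre : (y1 * (2 ^ m * x2)) * (y2 * (2 ^ m * x1))
      = ((2:ℝ) ^ m) ^ 2 * ((x1 * y1) * (x2 * y2)) := by ring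
  have hfin : K * K ≤ ((2:ℝ) ^ m) ^ 2 * ((2 * N) * (2 * N)) := by
    rw [hre] at h12
    have hprod : (x1 * y1) * (x2 * y2) ≤ (2 * N) * (2 * N) :=
      mul_le_mul hxy1 hxy2 (mul_nonneg x2nn y2nn) (by nlinarith)
    nlinarith
  have hexp : (2:ℝ) ^ (Fintype.card ι - 1) = 2 * 2 ^ m := by
    have : Fintype.card ι - 1 = m + 1 := by omega
    rw [this, pow_succ]
    ring
  rw [hexp]
  nlinarith [hfin, hKnn, hNnn, le_of_lt hpm, sq_nonneg (K + 2 * 2 ^ m * N), sq_nonneg (K - 2 * 2 ^ m * N), mul_nonneg (le_of_lt hpm) hNnn]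
end Core2



section Mermin
variable {n : ℕ}

lemma pad_eq_padI (j : Fin n) (X : QubitMat) : pad n j X = padI j X := rfl

lemma padI_neg {ι : Type*} [Fintype ι] [DecidableEq ι] (j : ι) (X : QubitMat) :
    padI (ι := ι) j (-X) = -(padI j X) := by
  rw [← neg_one_smul ℂ X, padI_smul, neg_one_smul]

def TkS (n k : ℕ) : Finset (Fin n) := Finset.univ.filter (fun j => (j : ℕ) < k)

lemma TkS_zero : TkS n 0 = ∅ := by ext j; simp [TkS]

lemma TkS_univ : TkS n n = Finset.univ := by ext j; simp [TkS, j.isLt]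

lemma TkS_succ {k : ℕ} (hk : k < n) : TkS n (k + 1) = insert ⟨k, hk⟩ (TkS n k) := by
  ext j
  simp only [TkS, Finset.mem_filter, Finset.mem_univ, true_and, Finset.mem_insert, Fin.ext_iff]
  omega

lemma mem_TkS_self {k : ℕ} (hk : k < n) : (⟨k, hk⟩ : Fin n) ∉ TkS n k := by simp [TkS]

lemma blockPair_eq_KT (A : Fin n → Fin 2 → QubitMat) (k : ℕ) (hk : k ≤ n) :
    (blockPair A 0 k).1 + Complex.I • (blockPair A 0 k).2
      = KT (Bfam (fun j => A j 0) (fun j => A j 1)) (TkS n k) := by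
  induction k with
  | zero =>
    rw [TkS_zero, KT_empty]
    show (1 : NMat n) + Complex.I • (0 : NMat n) = 1
    simp
  | succ k ih =>
    have hkn : 0 + k < n := by omega
    have hkn' : k < n := by omega
    have ih' := ih (by omega)
    have hfin : (⟨0 + k, hkn⟩ : Fin n) = ⟨k, hkn'⟩ := by
      apply Fin.ext; simp
    have hunf : blockPair A 0 (k + 1)
        = ((blockPair A 0 k).1 * pad n ⟨0 + k, hkn⟩ (A ⟨0 + k, hkn⟩ 0)
            - (blockPair A 0 k).2 * pad n ⟨0 + k, hkn⟩ (A ⟨0 + k, hkn⟩ 1),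
           (blockPair A 0 k).1 * pad n ⟨0 + k, hkn⟩ (A ⟨0 + k, hkn⟩ 1)
            + (blockPair A 0 k).2 * pad n ⟨0 + k, hkn⟩ (A ⟨0 + k, hkn⟩ 0)) := by
      rw [blockPair]
      simp only [dif_pos hkn]
    rw [hunf, TkS_succ hkn', KT_insert_right _ (mem_TkS_self hkn'), ← ih', hfin]
    have hBj : Bfam (fun j => A j 0) (fun j => A j 1) (⟨k, hkn'⟩ : Fin n)
        = A ⟨k, hkn'⟩ 0 + Complex.I • A ⟨k, hkn'⟩ 1 := rfl
    rw [hBj, padI_add, padI_smul, ← pad_eq_padI, ← pad_eq_padI]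
    simp only [Matrix.mul_add, Matrix.add_mul, Matrix.smul_mul, Matrix.mul_smul, smul_add,
      smul_sub, smul_smul, Complex.I_mul_I]
    module

lemma blockPair_negA (A : Fin n → Fin 2 → QubitMat) (k : ℕ) :
    (blockPair (fun j i => if i = 0 then A j 0 else -(A j 1)) 0 k).1 = (blockPair A 0 k).1
    ∧ (blockPair (fun j i => if i = 0 then A j 0 else -(A j 1)) 0 k).2
        = -(blockPair A 0 k).2 := by
  induction k with
  | zero => exact ⟨rfl, by simp [blockPair]⟩
  | succ k ih =>
    by_cases hkn : 0 + k < n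
    · constructor
      · show (blockPair _ 0 (k+1)).1 = _
        rw [blockPair, blockPair]
        simp only [dif_pos hkn]
        rw [ih.1, ih.2]
        simp only [if_true, show ((1:Fin 2) = 0) ↔ False from by decide, if_false]
        rw [show pad n ⟨0+k, hkn⟩ (-(A ⟨0+k, hkn⟩ 1)) = -(pad n ⟨0+k, hkn⟩ (A ⟨0+k, hkn⟩ 1))
          from padI_neg _ _]
        simp only [Matrix.mul_neg, Matrix.neg_mul, neg_neg, sub_neg_eq_add, neg_add]
        try abel
      · show (blockPair _ 0 (k+1)).2 = _
        rw [blockPair, blockPair]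
        simp only [dif_pos hkn]
        rw [ih.1, ih.2]
        simp only [if_true, show ((1:Fin 2) = 0) ↔ False from by decide, if_false]
        rw [show pad n ⟨0+k, hkn⟩ (-(A ⟨0+k, hkn⟩ 1)) = -(pad n ⟨0+k, hkn⟩ (A ⟨0+k, hkn⟩ 1))
          from padI_neg _ _]
        simp only [Matrix.mul_neg, Matrix.neg_mul, neg_neg, sub_neg_eq_add, neg_add]
        try abel
    · constructor
      · rw [blockPair, blockPair]
        simp only [dif_neg hkn]
        exact ih.1
      · rw [blockPair, blockPair]
        simp only [dif_neg hkn]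
        exact ih.2

lemma merminM_eq (A : Fin n → Fin 2 → QubitMat)
    (hA : ∀ j i, (A j i).IsHermitian ∧ A j i * A j i = 1) :
    merminM A + Complex.I • merminN A = KT (Bfam (fun j => A j 0) (fun j => A j 1)) Finset.univ
    ∧ merminM A - Complex.I • merminN A
        = (KT (Bfam (fun j => A j 0) (fun j => A j 1)) Finset.univ)ᴴ := by
  constructor
  · rw [← TkS_univ (n := n)]
    exact blockPair_eq_KT A n le_rfl
  · have h1 := blockPair_eq_KT (fun j i => if i = 0 then A j 0 else -(A j 1)) n le_rfl
    have h2 := blockPair_negA A n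
    rw [h2.1, h2.2, TkS_univ] at h1
    have h3 : merminM A - Complex.I • merminN A
        = KT (Bfam (fun j => A j 0) (fun j => -(A j 1))) Finset.univ := by
      have e : merminM A - Complex.I • merminN A
          = (blockPair A 0 n).1 + Complex.I • -(blockPair A 0 n).2 := by
        show _ = merminM A + Complex.I • -(merminN A)
        rw [smul_neg, ← sub_eq_add_neg]
      rw [e, h1]
      rfl
    have hfam : (fun j : Fin n => (Bfam (fun j => A j 0) (fun j => A j 1) j)ᴴ)
        = Bfam (fun j => A j 0) (fun j => -(A j 1)) := by
      funext j
      show (A j 0 + Complex.I • A j 1)ᴴ = A j 0 + Complex.I • (-(A j 1))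
      rw [dich_conjT (hA j 0).1 (hA j 1).1, smul_neg, ← sub_eq_add_neg]
    rw [h3, KT_conjTranspose, hfam]
end Mermin

section Split
variable {ι : Type*} [Fintype ι] [DecidableEq ι]

lemma KT_univ_apply (B : ι → QubitMat) (f g : ι → Fin 2) :
    KT B Finset.univ f g = ∏ j, B j (f j) (g j) := by
  unfold KT
  rw [Finset.compl_univ, Finset.prod_empty, mul_one]

lemma ip_expand (M : IMat ι) (x y : (ι → Fin 2) → ℂ) :
    ip x (M *ᵥ y) = ∑ f, ∑ g, star (x f) * (M f g * y g) := by
  unfold ip Matrix.mulVec dotProduct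
  refine Finset.sum_congr rfl fun f _ => ?_
  rw [Pi.star_apply, Finset.mul_sum]

lemma ip_comm (x y : (ι → Fin 2) → ℂ) : ip x y = starRingEnd ℂ (ip y x) := by
  unfold ip dotProduct
  rw [map_sum]
  refine Finset.sum_congr rfl fun f _ => ?_
  simp [mul_comm]

lemma sqn_sum (v : (ι → Fin 2) → ℂ) : sqn v = ∑ f, Complex.normSq (v f) := by
  unfold sqn
  rw [EuclideanSpace.norm_eq, Real.sq_sqrt (by positivity)]
  refine Finset.sum_congr rfl fun f _ => ?_
  rw [show ‖toE v f‖ = ‖v f‖ from rfl, Complex.sq_norm]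

end Split

section SumSplit
variable {n : ℕ} (S : Finset (Fin n))

lemma sum_split {M : Type*} [AddCommMonoid M] (H : (Fin n → Fin 2) → M) :
    ∑ f, H f = ∑ p : ({i : Fin n // i ∈ S} → Fin 2), ∑ q : ({i : Fin n // i ∉ S} → Fin 2),
      H ((Equiv.piEquivPiSubtypeProd (fun i => i ∈ S) (fun _ => Fin 2)).symm (p, q)) := by
  rw [← Equiv.sum_comp (Equiv.piEquivPiSubtypeProd (fun i : Fin n => i ∈ S)
    (fun _ => Fin 2)).symm H, Fintype.sum_prod_type]

lemma symm_apply_mem (p : {i : Fin n // i ∈ S} → Fin 2) (q : {i : Fin n // i ∉ S} → Fin 2)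
    (i : {i : Fin n // i ∈ S}) :
    (Equiv.piEquivPiSubtypeProd (fun i => i ∈ S) (fun _ => Fin 2)).symm (p, q) i.1 = p i := by
  rw [Equiv.piEquivPiSubtypeProd_symm_apply, dif_pos i.2]

lemma symm_apply_not_mem (p : {i : Fin n // i ∈ S} → Fin 2) (q : {i : Fin n // i ∉ S} → Fin 2)
    (i : {i : Fin n // i ∉ S}) :
    (Equiv.piEquivPiSubtypeProd (fun i => i ∈ S) (fun _ => Fin 2)).symm (p, q) i.1 = q i := by
  rw [Equiv.piEquivPiSubtypeProd_symm_apply, dif_neg i.2]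

end SumSplit


/-- for a pure product state across a bipartition with at least
    two qubits on each side, the Mermin expectation value never exceeds
    2^{n−2}, for arbitrary dichotomic local observables. -/
theorem mermin_robust_bisep_bound
    (n : ℕ) (hn : 4 ≤ n)
    (S : Finset (Fin n)) (hS : 2 ≤ S.card) (hSc : 2 ≤ Sᶜ.card)
    (ψ : (Fin n → Fin 2) → ℂ) (hunit : IsUnitVec ψ)
    (φ : ({i : Fin n // i ∈ S} → Fin 2) → ℂ)
    (χ : ({i : Fin n // i ∉ S} → Fin 2) → ℂ)
    (hprod : ∀ f, ψ f = φ (fun i => f i.1) * χ (fun i => f i.1))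
    (A : Fin n → Fin 2 → QubitMat)
    (hA : ∀ (j : Fin n) (i : Fin 2), IsDichotomic (A j i)) :
    (expectVal ψ (merminM A)).re ≤ (2 : ℝ) ^ (n - 2) := by
  classical
  set e := Equiv.piEquivPiSubtypeProd (fun i : Fin n => i ∈ S) (fun _ => Fin 2) with he
  set Kn := KT (Bfam (fun j : Fin n => A j 0) (fun j => A j 1)) Finset.univ with hKn
  set K₁ := KT (Bfam (fun i : {i : Fin n // i ∈ S} => A i.1 0) (fun i => A i.1 1))
    Finset.univ with hK₁
  set K₂ := KT (Bfam (fun i : {i : Fin n // i ∉ S} => A i.1 0) (fun i => A i.1 1))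
    Finset.univ with hK₂
  have hψm : ∀ p q, ψ (e.symm (p, q)) = φ p * χ q := by
    intro p q
    rw [hprod]
    congr 1
    · congr 1
      funext i
      exact symm_apply_mem S p q i
    · congr 1
      funext i
      exact symm_apply_not_mem S p q i
  have hKapply : ∀ p q p' q', Kn (e.symm (p, q)) (e.symm (p', q')) = K₁ p p' * K₂ q q' := by
    intro p q p' q'
    rw [hKn, hK₁, hK₂, KT_univ_apply, KT_univ_apply, KT_univ_apply]
    rw [← Finset.prod_mul_prod_compl S]
    congr 1
    · rw [Finset.prod_subtype S (fun x => Iff.rfl)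
        (fun j => Bfam (fun j : Fin n => A j 0) (fun j => A j 1) j
          (e.symm (p, q) j) (e.symm (p', q') j))]
      refine Finset.prod_congr rfl fun i _ => ?_
      rw [symm_apply_mem S p q i, symm_apply_mem S p' q' i]
      rfl
    · rw [Finset.prod_subtype Sᶜ (fun x => Finset.mem_compl)
        (fun j => Bfam (fun j : Fin n => A j 0) (fun j => A j 1) j
          (e.symm (p, q) j) (e.symm (p', q') j))]
      refine Finset.prod_congr rfl fun i _ => ?_
      rw [symm_apply_not_mem S p q i, symm_apply_not_mem S p' q' i]
      rfl
  -- factorization of the expectation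
  have hfact : ip ψ (Kn *ᵥ ψ) = ip φ (K₁ *ᵥ φ) * ip χ (K₂ *ᵥ χ) := by
    have lhs : ip ψ (Kn *ᵥ ψ) = ∑ p, ∑ q, ∑ p', ∑ q',
        star (ψ (e.symm (p, q))) * (Kn (e.symm (p, q)) (e.symm (p', q')) * ψ (e.symm (p', q'))) := by
      rw [ip_expand, sum_split S]
      refine Finset.sum_congr rfl fun p _ => Finset.sum_congr rfl fun q _ => ?_
      exact sum_split S _
    have rhs : ip φ (K₁ *ᵥ φ) * ip χ (K₂ *ᵥ χ) = ∑ p, ∑ q, ∑ p', ∑ q',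
        (star (φ p) * (K₁ p p' * φ p')) * (star (χ q) * (K₂ q q' * χ q')) := by
      rw [ip_expand, ip_expand, Finset.sum_mul_sum]
      refine Finset.sum_congr rfl fun p _ => Finset.sum_congr rfl fun q _ => ?_
      rw [Finset.sum_mul_sum]
    rw [lhs, rhs]
    refine Finset.sum_congr rfl fun p _ => Finset.sum_congr rfl fun q _ =>
      Finset.sum_congr rfl fun p' _ => Finset.sum_congr rfl fun q' _ => ?_
    rw [hψm, hψm, hKapply, star_mul']
    ring
  -- unit norm factorization
  have hunit' : sqn φ * sqn χ = 1 := by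
    have h1 : (∑ f, Complex.normSq (ψ f))
        = (∑ p, Complex.normSq (φ p)) * (∑ q, Complex.normSq (χ q)) := by
      rw [Finset.sum_mul_sum, sum_split S]
      refine Finset.sum_congr rfl fun p _ => Finset.sum_congr rfl fun q _ => ?_
      rw [hψm, Complex.normSq_mul]
    rw [sqn_sum, sqn_sum, ← h1]
    exact hunit
  -- real part of the expectation equals re of z
  obtain ⟨hM1, hM2⟩ := merminM_eq A (fun j i => hA j i)
  set z := ip ψ (Kn *ᵥ ψ) with hz
  have hz1 : expectVal ψ (merminM A) + Complex.I * ip ψ (merminN A *ᵥ ψ) = z := by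
    rw [hz, hKn, ← hM1, Matrix.add_mulVec, ip_add_right, Matrix.smul_mulVec,
      ip_smul_right]
    rfl
  have hz2 : expectVal ψ (merminM A) - Complex.I * ip ψ (merminN A *ᵥ ψ)
      = starRingEnd ℂ z := by
    have hconj : ip ψ (Knᴴ *ᵥ ψ) = starRingEnd ℂ z := by
      rw [ip_mulVec_right, Matrix.conjTranspose_conjTranspose, ip_comm, ← hz]
    rw [← hconj, hKn, ← hM2, Matrix.sub_mulVec, ip_sub_right, Matrix.smul_mulVec,
      ip_smul_right]
    rfl
  have hre : (expectVal ψ (merminM A)).re = z.re := by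
    have h2 : 2 * expectVal ψ (merminM A) = z + starRingEnd ℂ z := by
      linear_combination hz1 + hz2
    have hE : expectVal ψ (merminM A) = ((z.re : ℝ) : ℂ) := by
      have h2' : (2:ℂ) * expectVal ψ (merminM A) = 2 * ((z.re : ℝ) : ℂ) := by
        rw [h2, Complex.add_conj]
        push_cast
        ring
      exact mul_left_cancel₀ two_ne_zero h2'
    rw [hE, Complex.ofReal_re]
  -- core bounds
  have hcard1 : 2 ≤ Fintype.card {i : Fin n // i ∈ S} := by
    rw [Fintype.card_coe]; exact hS
  have hc2 : Fintype.card {i : Fin n // i ∉ S} = Sᶜ.card := by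
    rw [Fintype.card_subtype_compl, Fintype.card_coe, Finset.card_compl, Fintype.card_fin]
  have hcard2 : 2 ≤ Fintype.card {i : Fin n // i ∉ S} := by omega
  have hb1 := core_bound (fun i : {i : Fin n // i ∈ S} => A i.1 0)
    (fun i => A i.1 1) hcard1 (fun i => hA i.1 0) (fun i => hA i.1 1) φ
  have hb2 := core_bound (fun i : {i : Fin n // i ∉ S} => A i.1 0)
    (fun i => A i.1 1) hcard2 (fun i => hA i.1 0) (fun i => hA i.1 1) χ
  rw [Fintype.card_coe] at hb1
  rw [hc2] at hb2
  rw [← hK₁] at hb1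
  rw [← hK₂] at hb2
  -- final numeric chain
  have habs : ‖z‖ = ‖ip φ (K₁ *ᵥ φ)‖ * ‖ip χ (K₂ *ᵥ χ)‖ := by
    rw [hfact, norm_mul]
  have hnn1 : (0:ℝ) ≤ 2 ^ (S.card - 1) * sqn φ := by
    have := sqn_nonneg φ; positivity
  have hnn2 : (0:ℝ) ≤ 2 ^ (Sᶜ.card - 1) * sqn χ := by
    have := sqn_nonneg χ; positivity
  have hmul : ‖z‖ ≤ (2 ^ (S.card - 1) * sqn φ) * (2 ^ (Sᶜ.card - 1) * sqn χ) := by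
    rw [habs]
    exact mul_le_mul hb1 hb2 (norm_nonneg _) hnn1
  have hpow : ((2:ℝ) ^ (S.card - 1)) * 2 ^ (Sᶜ.card - 1) = 2 ^ (n - 2) := by
    rw [← pow_add]
    congr 1
    have hsum : S.card + Sᶜ.card = n := by
      rw [Finset.card_add_card_compl, Fintype.card_fin]
    omega
  have hfin : ‖z‖ ≤ 2 ^ (n - 2) := by
    calc ‖z‖ ≤ (2 ^ (S.card - 1) * sqn φ) * (2 ^ (Sᶜ.card - 1) * sqn χ) := hmul
      _ = (((2:ℝ) ^ (S.card - 1)) * 2 ^ (Sᶜ.card - 1)) * (sqn φ * sqn χ) := by ring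
      _ = 2 ^ (n - 2) := by rw [hpow, hunit', mul_one]
  rw [hre]
  exact le_trans (Complex.re_le_norm z) hfin
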